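/- The symmetric 4×4 matrix g with rows g = [[1, −2z, x¹, x²],[−2z, 1+4z²+((x¹)²+(x²)²)/4, x²/2−2zx¹, −x¹/2−2zx²],[x¹, x²/2−2zx¹, 1+(x¹)², x¹x²],[x², −x¹/2−2zx², x¹x², 1+(x²)²]] is positive definite for all values of (z, x¹, x²) ∈ ℝ³. -/

import Mathlib

noncomputable section

/-- The symmetric 4×4 matrix `g^{μν}` (indices ordered `a, z, x¹, x²`). -/
def gMetric (z x1 x2 : ℝ) : Matrix (Fin 4) (Fin 4) ℝ :=
  !![1, -2 * z, x1, x2;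
     -2 * z, 1 + 4 * z ^ 2 + (x1 ^ 2 + x2 ^ 2) / 4, x2 / 2 - 2 * z * x1, -x1 / 2 - 2 * z * x2;
     x1, x2 / 2 - 2 * z * x1, 1 + x1 ^ 2, x1 * x2;
     x2, -x1 / 2 - 2 * z * x2, x1 * x2, 1 + x2 ^ 2]

set_option maxHeartbeats 1000000 in
/-- the matrix `g` is positive definite for all `(z, x¹, x²) ∈ ℝ³`. -/
theorem gMetric_posDef (z x1 x2 : ℝ) : (gMetric z x1 x2).PosDef := by
  rw [Matrix.posDef_iff_dotProduct_mulVec]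
  constructor
  · ext i j
    fin_cases i <;> fin_cases j <;>
      simp [gMetric, Matrix.conjTranspose, Matrix.IsHermitian, Matrix.transpose_apply, Matrix.vecHead, Matrix.vecTail]
  · intro x hx
    obtain ⟨i, hi⟩ : ∃ i, x i ≠ 0 := by
      by_contra h
      push_neg at h
      exact hx (funext h)
    set p := x 0 with hp
    set q := x 1 with hq
    set r := x 2 with hr
    set s := x 3 with hs
    have key : dotProduct (star x) (Matrix.mulVec (gMetric z x1 x2) x) =
        (p - 2 * z * q + x1 * r + x2 * s) ^ 2 + q ^ 2 +
        (r + x2 * q / 2) ^ 2 + (s - x1 * q / 2) ^ 2 := by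
      simp [gMetric, Matrix.mulVec, dotProduct, Fin.sum_univ_four,
        ← hp, ← hq, ← hr, ← hs]
      ring
    rw [key]
    rcases eq_or_lt_of_le (by positivity : (0:ℝ) ≤
        (p - 2 * z * q + x1 * r + x2 * s) ^ 2 + q ^ 2 +
        (r + x2 * q / 2) ^ 2 + (s - x1 * q / 2) ^ 2) with heq | hlt
    · exfalso
      have h1 := sq_nonneg (p - 2 * z * q + x1 * r + x2 * s)
      have h3 := sq_nonneg (r + x2 * q / 2)
      have h4 := sq_nonneg (s - x1 * q / 2)
      have hq2 : q ^ 2 = 0 := by nlinarith [sq_nonneg q]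
      have hq0 : q = 0 := by
        have := pow_eq_zero_iff (n := 2) (by norm_num) |>.mp hq2
        simpa using this
      have hr2 : (r + x2 * q / 2) ^ 2 = 0 := by nlinarith [sq_nonneg q]
      have hr0 : r = 0 := by
        have := pow_eq_zero_iff (n := 2) (by norm_num) |>.mp hr2
        rw [hq0] at this; linarith [this]
      have hs2 : (s - x1 * q / 2) ^ 2 = 0 := by nlinarith [sq_nonneg q]
      have hs0 : s = 0 := by
        have := pow_eq_zero_iff (n := 2) (by norm_num) |>.mp hs2
        rw [hq0] at this; linarith [this]
      have hp2 : (p - 2 * z * q + x1 * r + x2 * s) ^ 2 = 0 := by nlinarith [sq_nonneg q]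
      have hp0 : p = 0 := by
        have := pow_eq_zero_iff (n := 2) (by norm_num) |>.mp hp2
        rw [hq0, hr0, hs0] at this; linarith [this]
      fin_cases i
      · exact hi (show p = 0 from hp0)
      · exact hi (show q = 0 from hq0)
      · exact hi (show r = 0 from hr0)
      · exact hi (show s = 0 from hs0)
    · exact hlt
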